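/- Let G = (V,E) be a finite graph with inductive independence number ρ with respect to an ordering ≺, i.e., for every independent set S and every vertex v, |{u ∈ S : u ≻ v, {u,v} ∈ E}| ≤ ρ. Then the greedy algorithm that processes vertices in increasing ≺-order and adds a vertex whenever it has no neighbor among previously added vertices outputs an independent set I with |I| ≥ |S|/ρ for every independent set S of G. In particular, greedy is a ρ-approximation for maximum independent set. -/

import Mathlib

theorem stmt3 {V : Type*} [Fintype V] [DecidableEq V] [LinearOrder V]
    (G : SimpleGraph V) [DecidableRel G.Adj] (ρ : ℕ) (hρ : 1 ≤ ρ)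
    (hindnum : ∀ S : Finset V, (∀ u ∈ S, ∀ v ∈ S, ¬ G.Adj u v) →
      ∀ v : V, (S.filter fun u => v < u ∧ G.Adj u v).card ≤ ρ)
    (I : Finset V)
    (hgreedy : ∀ v : V, v ∈ I ↔ ∀ u ∈ I, u < v → ¬ G.Adj u v) :
    (∀ u ∈ I, ∀ v ∈ I, ¬ G.Adj u v) ∧
      ∀ S : Finset V, (∀ u ∈ S, ∀ v ∈ S, ¬ G.Adj u v) → S.card ≤ ρ * I.card := by
  have hIind : ∀ u ∈ I, ∀ v ∈ I, ¬ G.Adj u v := by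
    intro u hu v hv hadj
    rcases lt_trichotomy u v with h | h | h
    · exact (hgreedy v).mp hv u hu h hadj
    · exact G.loopless.irrefl u (h ▸ hadj)
    · exact (hgreedy u).mp hu v hv h hadj.symm
  refine ⟨hIind, ?_⟩
  intro S hS
  classical
  set f : V → V := fun v =>
    if h : ∃ u ∈ I, u < v ∧ G.Adj u v then h.choose else v with hf
  have hmap : ∀ s ∈ S, f s ∈ S → True := fun _ _ _ => trivial
  have hfI : ∀ s ∈ S, f s ∈ I := by
    intro s hs
    by_cases h : ∃ u ∈ I, u < s ∧ G.Adj u s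
    · simp only [hf, dif_pos h]
      exact h.choose_spec.1
    · simp only [hf, dif_neg h]
      rw [hgreedy]
      intro u hu hlt hadj
      exact h ⟨u, hu, hlt, hadj⟩
  refine Finset.card_le_mul_card_image_of_maps_to hfI ρ ?_
  intro i hi
  have key : ∀ s ∈ S, f s = i → s ≠ i → i < s ∧ G.Adj s i := by
    intro s hs hfs hne
    by_cases h : ∃ u ∈ I, u < s ∧ G.Adj u s
    · have := h.choose_spec
      rw [hf] at hfs
      simp only [dif_pos h] at hfs
      rw [hfs] at this
      exact ⟨this.2.1, this.2.2.symm⟩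
    · simp only [hf, dif_neg h] at hfs
      exact absurd hfs hne
  by_cases hiS : i ∈ S
  · have : S.filter (fun s => f s = i) ⊆ {i} := by
      intro s hs
      simp only [Finset.mem_filter] at hs
      simp only [Finset.mem_singleton]
      by_contra hne
      exact hS s hs.1 i hiS (key s hs.1 hs.2 hne).2
    calc (S.filter (fun s => f s = i)).card ≤ ({i} : Finset V).card :=
          Finset.card_le_card this
      _ = 1 := Finset.card_singleton i
      _ ≤ ρ := hρ
  · have : S.filter (fun s => f s = i) ⊆ S.filter (fun u => i < u ∧ G.Adj u i) := by
      intro s hs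
      simp only [Finset.mem_filter] at hs ⊢
      have hne : s ≠ i := fun h => hiS (h ▸ hs.1)
      exact ⟨hs.1, key s hs.1 hs.2 hne⟩
    exact le_trans (Finset.card_le_card this) (hindnum S hS i)
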